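/- arXiv:2204.00158 — 3 statements merged into one kernel-verified Lean document; each statement's English description precedes it below -/
import Mathlib

section
/- For every positive integer n, if the Aztec diamond of order n admits a tiling by straight tetrominos and skew tetrominos, then n is congruent to 0 or 3 modulo 4. -/
/-- Translate a set of cells by a vector `v`. -/
def cellTranslate (v : ℤ × ℤ) (s : Finset (ℤ × ℤ)) : Finset (ℤ × ℤ) :=
  s.image (fun p => (p.1 + v.1, p.2 + v.2))

/-- The Aztec diamond of order `n`: cells `(i,j)` with `|2i+1| + |2j+1| ≤ 2n`. -/
noncomputable def aztec (n : ℕ) : Finset (ℤ × ℤ) :=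
  (Finset.Icc (-(n : ℤ)) (n : ℤ) ×ˢ Finset.Icc (-(n : ℤ)) (n : ℤ)).filter
    (fun p => |2 * p.1 + 1| + |2 * p.2 + 1| ≤ 2 * (n : ℤ))

def IsHorizDomino (t : Finset (ℤ × ℤ)) : Prop :=
  ∃ v, t = cellTranslate v ({(0,0), (1,0)} : Finset (ℤ × ℤ))

def IsDomino (t : Finset (ℤ × ℤ)) : Prop :=
  ∃ v, t = cellTranslate v ({(0,0), (1,0)} : Finset (ℤ × ℤ)) ∨
       t = cellTranslate v ({(0,0), (0,1)} : Finset (ℤ × ℤ))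

def IsStraightTetromino (t : Finset (ℤ × ℤ)) : Prop :=
  ∃ v, t = cellTranslate v ({(0,0), (1,0), (2,0), (3,0)} : Finset (ℤ × ℤ)) ∨
       t = cellTranslate v ({(0,0), (0,1), (0,2), (0,3)} : Finset (ℤ × ℤ))

def IsHorizStraightTetromino (t : Finset (ℤ × ℤ)) : Prop :=
  ∃ v, t = cellTranslate v ({(0,0), (1,0), (2,0), (3,0)} : Finset (ℤ × ℤ))

def IsSkewTetromino (t : Finset (ℤ × ℤ)) : Prop :=
  ∃ v, t = cellTranslate v ({(0,0), (1,0), (1,1), (2,1)} : Finset (ℤ × ℤ)) ∨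
       t = cellTranslate v ({(0,1), (1,1), (1,0), (2,0)} : Finset (ℤ × ℤ)) ∨
       t = cellTranslate v ({(0,0), (0,1), (1,1), (1,2)} : Finset (ℤ × ℤ)) ∨
       t = cellTranslate v ({(1,0), (1,1), (0,1), (0,2)} : Finset (ℤ × ℤ))

def IsHorizSkewTetromino (t : Finset (ℤ × ℤ)) : Prop :=
  ∃ v, t = cellTranslate v ({(0,0), (1,0), (1,1), (2,1)} : Finset (ℤ × ℤ)) ∨
       t = cellTranslate v ({(0,1), (1,1), (1,0), (2,0)} : Finset (ℤ × ℤ))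

def IsSquareTetromino (t : Finset (ℤ × ℤ)) : Prop :=
  ∃ v, t = cellTranslate v ({(0,0), (1,0), (0,1), (1,1)} : Finset (ℤ × ℤ))

/-- `T` is a tiling of the finite region `R` where every tile satisfies `P`:
the tiles satisfy `P`, are pairwise disjoint, and their union is `R`. -/
def IsTiling (R : Finset (ℤ × ℤ)) (P : Finset (ℤ × ℤ) → Prop)
    (T : Finset (Finset (ℤ × ℤ))) : Prop :=
  (∀ t ∈ T, P t) ∧ (T : Set (Finset (ℤ × ℤ))).PairwiseDisjoint id ∧
    T.biUnion id = R

/-- The finset of all tilings of `R` by tiles satisfying `P`.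
(Every tiling of `R` consists of subsets of `R`, hence lies in `R.powerset.powerset`.) -/
noncomputable def tilings (R : Finset (ℤ × ℤ)) (P : Finset (ℤ × ℤ) → Prop) :
    Finset (Finset (Finset (ℤ × ℤ))) :=
  @Finset.filter _ (fun T => IsTiling R P T) (Classical.decPred _) R.powerset.powerset


/-- the weight of a cell with coordinate sum `s` -/
def fw (s : ℤ) : ℕ := if s % 4 = 0 ∨ s % 4 = 3 then 1 else 0

/-- half-length offset of the `i`-th column of the Aztec diamond -/
def bnd (i : ℤ) : ℤ := if 0 ≤ i then i else -1 - i

/-- sum of weights over an interval of coordinate sums -/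
noncomputable def G (a b : ℤ) : ℕ := ∑ s ∈ Finset.Icc a b, fw s

lemma cellTranslate_sum (v : ℤ × ℤ) (s : Finset (ℤ × ℤ)) (g : ℤ × ℤ → ℕ) :
    ∑ p ∈ cellTranslate v s, g p = ∑ p ∈ s, g (p.1 + v.1, p.2 + v.2) := by
  unfold cellTranslate
  rw [Finset.sum_image]
  rintro ⟨a, b⟩ _ ⟨c, d⟩ _ h
  simp only [Prod.mk.injEq] at h ⊢
  omega

lemma tile_sum_even (t : Finset (ℤ × ℤ))
    (h : IsStraightTetromino t ∨ IsSkewTetromino t) :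
    (∑ p ∈ t, fw (p.1 + p.2)) % 2 = 0 := by
  obtain ⟨v, h | h⟩ | ⟨v, h | h | h | h⟩ := h <;>
    subst h <;>
    rw [cellTranslate_sum, Finset.sum_insert (by decide), Finset.sum_insert (by decide),
      Finset.sum_insert (by decide), Finset.sum_singleton] <;>
    unfold fw <;> split_ifs <;> omega

lemma aztec_eq (n : ℕ) : aztec n =
    (Finset.Icc (-(n : ℤ)) (n : ℤ)).biUnion (fun i =>
      (Finset.Icc (bnd i - n) ((n : ℤ) - 1 - bnd i)).image (fun j => (i, j))) := by
  ext ⟨i, j⟩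
  simp only [aztec, Finset.mem_filter, Finset.mem_product, Finset.mem_Icc,
    Finset.mem_biUnion, Finset.mem_image, Prod.mk.injEq]
  constructor
  · rintro ⟨⟨⟨hi1, hi2⟩, hj1, hj2⟩, habs⟩
    rcases abs_cases (2 * i + 1) with ⟨e1, _⟩ | ⟨e1, _⟩ <;>
      rcases abs_cases (2 * j + 1) with ⟨e2, _⟩ | ⟨e2, _⟩ <;>
      rw [e1, e2] at habs <;>
      exact ⟨i, ⟨hi1, hi2⟩, j, by unfold bnd; split_ifs <;> omega, rfl, rfl⟩
  · rintro ⟨a, ⟨ha1, ha2⟩, b, hb, rfl, rfl⟩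
    unfold bnd at hb
    rcases abs_cases (2 * a + 1) with ⟨e1, _⟩ | ⟨e1, _⟩ <;>
      rcases abs_cases (2 * b + 1) with ⟨e2, _⟩ | ⟨e2, _⟩ <;>
      rw [e1, e2] <;> split_ifs at hb <;> omega

lemma G_par (m : ℕ) (a : ℤ) :
    G a (a + 2 * (m : ℤ) - 1) % 2 = if a % 2 = 0 then m % 2 else 0 := by
  induction m with
  | zero =>
    have h : Finset.Icc a (a + 2 * ((0:ℕ) : ℤ) - 1) = ∅ := by
      apply Finset.Icc_eq_empty; omega
    unfold G
    rw [h]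
    simp only [Finset.sum_empty]
    split_ifs <;> rfl
  | succ k ih =>
    have h1 : Finset.Icc a (a + 2 * ((k + 1 : ℕ) : ℤ) - 1) =
        insert (a + 2 * (k : ℤ) + 1) (insert (a + 2 * (k : ℤ))
          (Finset.Icc a (a + 2 * (k : ℤ) - 1))) := by
      ext x
      simp only [Finset.mem_Icc, Finset.mem_insert]
      push_cast
      omega
    unfold G at ih ⊢
    rw [h1, Finset.sum_insert (by simp only [Finset.mem_insert, Finset.mem_Icc]; omega),
      Finset.sum_insert (by simp only [Finset.mem_Icc]; omega)]
    have h3 : (fw (a + 2 * (k : ℤ)) + fw (a + 2 * (k : ℤ) + 1)) % 2 =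
        if a % 2 = 0 then 1 else 0 := by
      unfold fw; split_ifs <;> omega
    split_ifs at ih h3 ⊢ <;> omega

lemma fw_inner_sum (i a b : ℤ) : ∑ j ∈ Finset.Icc a b, fw (i + j) = G (i + a) (i + b) := by
  unfold G
  have h : Finset.Icc (i + a) (i + b) = (Finset.Icc a b).image (fun x => i + x) := by
    ext x
    simp only [Finset.mem_Icc, Finset.mem_image]
    constructor
    · intro hx
      exact ⟨x - i, by omega, by omega⟩
    · rintro ⟨y, hy, rfl⟩
      omega
  rw [h, Finset.sum_image (by intro x _ y _ h; have h' : i + x = i + y := h; omega)]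

lemma L1g (k : ℕ) : ∀ c : ℤ,
    ∑ i ∈ Finset.Icc c (c + (k : ℤ)), ((c + (k : ℤ) - i).toNat % 2) = (k + 1) / 2 := by
  induction k with
  | zero =>
    intro c
    simp
  | succ k ih =>
    intro c
    have h1 : Finset.Icc c (c + ((k + 1 : ℕ) : ℤ)) =
        insert c (Finset.Icc (c + 1) ((c + 1) + (k : ℤ))) := by
      ext x
      simp only [Finset.mem_Icc, Finset.mem_insert]
      push_cast
      omega
    rw [h1, Finset.sum_insert (by simp only [Finset.mem_Icc]; omega)]
    have h2 : ∑ i ∈ Finset.Icc (c + 1) ((c + 1) + (k : ℤ)),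
        ((c + ((k + 1 : ℕ) : ℤ) - i).toNat % 2) =
        ∑ i ∈ Finset.Icc (c + 1) ((c + 1) + (k : ℤ)), (((c + 1) + (k : ℤ) - i).toNat % 2) := by
      apply Finset.sum_congr rfl
      intro i _
      congr 2
      push_cast
      omega
    rw [h2, ih (c + 1)]
    push_cast
    omega

lemma L2g (k : ℕ) (c : ℤ) :
    ∑ i ∈ Finset.Icc c (c + (k : ℤ)), ((i - c + 1).toNat % 2) = (k + 2) / 2 := by
  induction k with
  | zero =>
    simp
  | succ k ih =>
    have h1 : Finset.Icc c (c + ((k + 1 : ℕ) : ℤ)) =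
        insert (c + (k : ℤ) + 1) (Finset.Icc c (c + (k : ℤ))) := by
      ext x
      simp only [Finset.mem_Icc, Finset.mem_insert]
      push_cast
      omega
    rw [h1, Finset.sum_insert (by simp only [Finset.mem_Icc]; omega), ih]
    omega

/-- The total weight of the Aztec diamond, mod 2. -/
lemma aztec_weight (n : ℕ) (hn : 0 < n) :
    (∑ p ∈ aztec n, fw (p.1 + p.2)) % 2 = ((n + 1) / 2) % 2 := by
  have hdisj : (↑(Finset.Icc (-(n : ℤ)) (n : ℤ)) : Set ℤ).PairwiseDisjoint
      (fun i => (Finset.Icc (bnd i - n) ((n : ℤ) - 1 - bnd i)).image (fun j => (i, j))) := by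
    intro x _ y _ hxy
    rw [Function.onFun, Finset.disjoint_left]
    rintro p hp hp'
    simp only [Finset.mem_image] at hp hp'
    obtain ⟨j, _, rfl⟩ := hp
    obtain ⟨j', _, h⟩ := hp'
    exact hxy (congrArg Prod.fst h).symm
  rw [aztec_eq, Finset.sum_biUnion hdisj]
  have hcols : ∀ i ∈ Finset.Icc (-(n : ℤ)) (n : ℤ),
      ∑ p ∈ (Finset.Icc (bnd i - n) ((n : ℤ) - 1 - bnd i)).image (fun j => (i, j)),
        fw (p.1 + p.2) = ∑ j ∈ Finset.Icc (bnd i - n) ((n : ℤ) - 1 - bnd i), fw (i + j) := by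
    intro i _
    rw [Finset.sum_image (by intro x _ y _ h; exact (Prod.mk.injEq _ _ _ _).mp h |>.2)]
  rw [Finset.sum_congr rfl hcols, Finset.sum_nat_mod]
  have hcol : ∀ i ∈ Finset.Icc (-(n : ℤ)) (n : ℤ),
      (∑ j ∈ Finset.Icc (bnd i - n) ((n : ℤ) - 1 - bnd i), fw (i + j)) % 2 =
      (if (i + bnd i - n) % 2 = 0 then (n - bnd i).toNat % 2 else 0) := by
    intro i hi
    simp only [Finset.mem_Icc] at hi
    have hb0 : 0 ≤ bnd i := by unfold bnd; split_ifs <;> omega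
    have hbn : bnd i ≤ (n : ℤ) := by unfold bnd; split_ifs <;> omega
    have hmz : (((n - bnd i).toNat : ℤ)) = (n : ℤ) - bnd i := by omega
    rw [fw_inner_sum]
    have hbound : i + ((n : ℤ) - 1 - bnd i) =
        (i + (bnd i - (n : ℤ))) + 2 * (((n - bnd i).toNat : ℕ) : ℤ) - 1 := by omega
    rw [hbound, G_par]
    split_ifs <;> omega
  rw [Finset.sum_congr rfl hcol]
  have hsplit : Finset.Icc (-(n : ℤ)) (n : ℤ) =
      Finset.Icc (-(n : ℤ)) (-1) ∪ Finset.Icc 0 (n : ℤ) := by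
    ext x
    simp only [Finset.mem_Icc, Finset.mem_union]
    omega
  have hdisj2 : Disjoint (Finset.Icc (-(n : ℤ)) (-1)) (Finset.Icc 0 (n : ℤ)) := by
    rw [Finset.disjoint_left]
    intro x hx hx'
    simp only [Finset.mem_Icc] at hx hx'
    omega
  rw [hsplit, Finset.sum_union hdisj2]
  rcases Nat.even_or_odd n with hpar | hpar
  · -- n even : negative columns contribute 0
    have hneg : ∑ i ∈ Finset.Icc (-(n : ℤ)) (-1),
        (if (i + bnd i - n) % 2 = 0 then (n - bnd i).toNat % 2 else 0) = 0 := by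
      apply Finset.sum_eq_zero
      intro i hi
      simp only [Finset.mem_Icc] at hi
      have hb : bnd i = -1 - i := by unfold bnd; split_ifs <;> omega
      rw [hb, if_neg (by obtain ⟨m, rfl⟩ := hpar; push_cast; omega)]
    have hpos : ∑ i ∈ Finset.Icc (0 : ℤ) (n : ℤ),
        (if (i + bnd i - n) % 2 = 0 then (n - bnd i).toNat % 2 else 0) =
        ∑ i ∈ Finset.Icc (0 : ℤ) (0 + (n : ℤ)), (((0 : ℤ) + (n : ℤ) - i).toNat % 2) := by
      apply Finset.sum_congr (by norm_num)
      intro i hi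
      simp only [Finset.mem_Icc] at hi
      have hb : bnd i = i := by unfold bnd; split_ifs <;> omega
      rw [hb, if_pos (by obtain ⟨m, rfl⟩ := hpar; push_cast; omega)]
      congr 2
      omega
    rw [hneg, hpos, L1g n 0]
    omega
  · -- n odd : nonnegative columns contribute 0
    have hpos : ∑ i ∈ Finset.Icc (0 : ℤ) (n : ℤ),
        (if (i + bnd i - n) % 2 = 0 then (n - bnd i).toNat % 2 else 0) = 0 := by
      apply Finset.sum_eq_zero
      intro i hi
      simp only [Finset.mem_Icc] at hi
      have hb : bnd i = i := by unfold bnd; split_ifs <;> omega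
      rw [hb, if_neg (by obtain ⟨m, rfl⟩ := hpar; push_cast; omega)]
    have hneg : ∑ i ∈ Finset.Icc (-(n : ℤ)) (-1),
        (if (i + bnd i - n) % 2 = 0 then (n - bnd i).toNat % 2 else 0) =
        ∑ i ∈ Finset.Icc (-(n : ℤ)) (-(n : ℤ) + ((n - 1 : ℕ) : ℤ)),
          ((i - (-(n : ℤ)) + 1).toNat % 2) := by
      apply Finset.sum_congr (by congr 1; omega)
      intro i hi
      simp only [Finset.mem_Icc] at hi
      have hb : bnd i = -1 - i := by unfold bnd; split_ifs <;> omega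
      rw [hb, if_pos (by obtain ⟨m, rfl⟩ := hpar; push_cast; omega)]
      congr 2
      omega
    rw [hpos, hneg, L2g (n - 1) (-(n : ℤ))]
    omega

/-- If the Aztec diamond of order `n` (with `n ≥ 1`) admits a tiling by straight
tetrominos and skew tetrominos, then `n ≡ 0` or `3 (mod 4)`. -/
theorem aztec_straight_skew_mod_four (n : ℕ) (hn : 0 < n)
    (h : ∃ T : Finset (Finset (ℤ × ℤ)),
      IsTiling (aztec n) (fun t => IsStraightTetromino t ∨ IsSkewTetromino t) T) :
    n % 4 = 0 ∨ n % 4 = 3 := by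
  obtain ⟨T, hP, hdisj, hunion⟩ := h
  have h0 : (∑ p ∈ aztec n, fw (p.1 + p.2)) % 2 = 0 := by
    rw [← hunion, Finset.sum_biUnion hdisj]
    simp only [id_eq]
    rw [Finset.sum_nat_mod, Finset.sum_congr rfl (fun t ht => tile_sum_even t (hP t ht))]
    simp
  have h1 := aztec_weight n hn
  omega
end

section
/- Let n be a nonnegative integer and let T be a tiling of the Aztec diamond of order n by horizontal skew tetrominos and square tetrominos. Splitting each tile of T into its two constituent horizontal dominos (the skew tetromino {(i,j),(i+1,j),(i+1,j+1),(i+2,j+1)} splits into {(i,j),(i+1,j)} and {(i+1,j+1),(i+2,j+1)}, and similarly for the other horizontal skew orientation; the square tetromino {(i,j),(i+1,j),(i,j+1),(i+1,j+1)} splits into {(i,j),(i+1,j)} and {(i,j+1),(i+1,j+1)}) yields the unique tiling of the Aztec diamond of order n by horizontal dominos. -/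
/-- Split a tile into its rows: the cells of the tile grouped by their
`y`-coordinate.  For a horizontal skew tetromino or a square tetromino this
splits the tile into its two constituent horizontal dominos. -/
def rowPieces (t : Finset (ℤ × ℤ)) : Finset (Finset (ℤ × ℤ)) :=
  (t.image Prod.snd).image (fun j => t.filter (fun p => p.2 = j))
section AuxLemmas

def RowConvex (R : Finset (ℤ × ℤ)) : Prop :=
  ∀ ⦃i₁ i₂ i j : ℤ⦄, (i₁, j) ∈ R → (i₂, j) ∈ R → i₁ ≤ i → i ≤ i₂ → (i, j) ∈ R

lemma aztec_rowConvex (n : ℕ) : RowConvex (aztec n) := by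
  intro i₁ i₂ i j h1 h2 l1 l2
  simp only [aztec, Finset.mem_filter, Finset.mem_product, Finset.mem_Icc,
    Int.abs_eq_natAbs] at h1 h2 ⊢
  omega

lemma isHorizDomino_iff (t : Finset (ℤ × ℤ)) :
    IsHorizDomino t ↔ ∃ a b : ℤ, t = {(a, b), (a + 1, b)} := by
  constructor
  · rintro ⟨⟨a, b⟩, rfl⟩
    refine ⟨a, b, ?_⟩
    ext ⟨x, y⟩
    simp [cellTranslate, Prod.ext_iff]
    omega
  · rintro ⟨a, b, rfl⟩
    refine ⟨(a, b), ?_⟩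
    ext ⟨x, y⟩
    simp [cellTranslate, Prod.ext_iff]
    omega

lemma tile_subset {R P T} (h : IsTiling R P T) {t} (ht : t ∈ T) : t ⊆ R :=
  h.2.2 ▸ Finset.subset_biUnion_of_mem id ht

lemma tiling_erase {R P T} (h : IsTiling R P T) {d} (hd : d ∈ T) :
    IsTiling (R \ d) P (T.erase d) := by
  obtain ⟨hP, hdisj, hun⟩ := h
  refine ⟨fun t ht => hP t (Finset.mem_of_mem_erase ht),
    hdisj.subset (by simp [Finset.coe_subset, Finset.erase_subset]), ?_⟩
  ext p
  simp only [Finset.mem_biUnion, Finset.mem_sdiff, Finset.mem_erase, id]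
  constructor
  · rintro ⟨t, ⟨tne, tT⟩, hp⟩
    refine ⟨hun ▸ Finset.mem_biUnion.2 ⟨t, tT, hp⟩, fun hpd => ?_⟩
    exact (Finset.disjoint_left.1 (hdisj tT hd tne)) hp hpd
  · rintro ⟨hpR, hpd⟩
    obtain ⟨t, tT, hp⟩ := Finset.mem_biUnion.1 (hun ▸ hpR : p ∈ T.biUnion id)
    exact ⟨t, ⟨fun e => hpd (e ▸ hp), tT⟩, hp⟩

lemma leftmost_mem {R D} (h : IsTiling R IsHorizDomino D) {a j : ℤ}
    (ha : (a, j) ∈ R) (ha' : (a - 1, j) ∉ R) :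
    ({(a, j), (a + 1, j)} : Finset (ℤ × ℤ)) ∈ D := by
  obtain ⟨d, hd, hpd⟩ := Finset.mem_biUnion.1 (h.2.2 ▸ ha : (a, j) ∈ D.biUnion id)
  obtain ⟨x, y, rfl⟩ := (isHorizDomino_iff d).1 (h.1 d hd)
  simp only [id, Finset.mem_insert, Finset.mem_singleton, Prod.mk.injEq] at hpd
  rcases hpd with ⟨rfl, rfl⟩ | ⟨he, rfl⟩
  · exact hd
  · exfalso
    exact ha' (tile_subset h hd (by simp [show x = a - 1 by omega]))

lemma horiz_unique (R : Finset (ℤ × ℤ)) (hR : RowConvex R) :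
    ∀ D₁ D₂, IsTiling R IsHorizDomino D₁ → IsTiling R IsHorizDomino D₂ → D₁ = D₂ := by
  induction R using Finset.strongInduction with
  | _ R ih =>
  intro D₁ D₂ h1 h2
  rcases R.eq_empty_or_nonempty with rfl | ⟨⟨a₀, j⟩, h0⟩
  · have key : ∀ D, IsTiling (∅ : Finset (ℤ × ℤ)) IsHorizDomino D → D = ∅ := by
      intro D hD
      refine Finset.eq_empty_of_forall_notMem fun t ht => ?_
      obtain ⟨x, y, rfl⟩ := (isHorizDomino_iff t).1 (hD.1 t ht)
      have := tile_subset hD ht (Finset.mem_insert_self _ _)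
      simp at this
    rw [key _ h1, key _ h2]
  · set S := (R.filter fun p => p.2 = j).image Prod.fst with hS
    have hSne : S.Nonempty := ⟨a₀, Finset.mem_image.2 ⟨(a₀, j), Finset.mem_filter.2 ⟨h0, rfl⟩, rfl⟩⟩
    set a := S.min' hSne with haDef
    have haR : (a, j) ∈ R := by
      obtain ⟨p, hp, hpa⟩ := Finset.mem_image.1 (S.min'_mem hSne)
      obtain ⟨hpR, hpj⟩ := Finset.mem_filter.1 hp
      have : p = (a, j) := Prod.ext hpa hpj
      exact this ▸ hpR
    have hmin : ∀ i : ℤ, (i, j) ∈ R → a ≤ i := fun i hi =>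
      S.min'_le i (Finset.mem_image.2 ⟨(i, j), Finset.mem_filter.2 ⟨hi, rfl⟩, rfl⟩)
    have hnot : (a - 1, j) ∉ R := fun hc => by have := hmin _ hc; omega
    have hd1 := leftmost_mem h1 haR hnot
    have hd2 := leftmost_mem h2 haR hnot
    set d₀ : Finset (ℤ × ℤ) := {(a, j), (a + 1, j)} with hd₀
    have hss : R \ d₀ ⊂ R := by
      refine Finset.ssubset_iff_of_subset (Finset.sdiff_subset) |>.2 ⟨(a, j), haR, ?_⟩
      simp [hd₀]
    have hconv : RowConvex (R \ d₀) := by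
      intro i₁ i₂ i j' m1 m2 l1 l2
      rw [Finset.mem_sdiff] at m1 m2 ⊢
      refine ⟨hR m1.1 m2.1 l1 l2, fun hc => ?_⟩
      have hm1 := m1.2
      simp only [hd₀, Finset.mem_insert, Finset.mem_singleton, Prod.mk.injEq] at hc hm1
      have hj : j' = j := by omega
      subst hj
      have := hmin _ m1.1
      omega
    have := ih _ hss hconv _ _ (tiling_erase h1 hd1) (tiling_erase h2 hd2)
    calc D₁ = insert d₀ (D₁.erase d₀) := (Finset.insert_erase hd1).symm
    _ = insert d₀ (D₂.erase d₀) := by rw [this]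
    _ = D₂ := Finset.insert_erase hd2

lemma shape_decomp {t : Finset (ℤ × ℤ)}
    (h : IsHorizSkewTetromino t ∨ IsSquareTetromino t) :
    ∃ a b c : ℤ, t = {(a, b), (a + 1, b), (c, b + 1), (c + 1, b + 1)} := by
  rcases h with ⟨⟨u, w⟩, rfl | rfl⟩ | ⟨⟨u, w⟩, rfl⟩
  · exact ⟨u, w, u + 1, by ext ⟨x, y⟩; simp [cellTranslate, Prod.ext_iff]; omega⟩
  · exact ⟨u + 1, w, u, by ext ⟨x, y⟩; simp [cellTranslate, Prod.ext_iff]; omega⟩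
  · exact ⟨u, w, u, by ext ⟨x, y⟩; simp [cellTranslate, Prod.ext_iff]; omega⟩

lemma rowPieces_pair (a b c : ℤ) :
    rowPieces ({(a, b), (a + 1, b), (c, b + 1), (c + 1, b + 1)} : Finset (ℤ × ℤ)) =
      {({(a, b), (a + 1, b)} : Finset (ℤ × ℤ)), {(c, b + 1), (c + 1, b + 1)}} := by
  have h1 : ({(a, b), (a + 1, b), (c, b + 1), (c + 1, b + 1)} : Finset (ℤ × ℤ)).image Prod.snd
      = {b, b + 1} := by
    ext y; simp
  rw [rowPieces, h1, Finset.image_insert, Finset.image_singleton]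
  congr 1
  · ext ⟨x, y⟩; simp [Prod.ext_iff]; omega
  · congr 1
    ext ⟨x, y⟩; simp [Prod.ext_iff]; omega

lemma pair_disjoint (a b c : ℤ) :
    Disjoint ({(a, b), (a + 1, b)} : Finset (ℤ × ℤ)) {(c, b + 1), (c + 1, b + 1)} := by
  rw [Finset.disjoint_left]
  intro ⟨x, y⟩ hp hp'
  simp [Prod.ext_iff] at hp hp'
  omega

lemma piece_subset {t d : Finset (ℤ × ℤ)} (hd : d ∈ rowPieces t) : d ⊆ t := by
  obtain ⟨j, _, rfl⟩ := Finset.mem_image.1 hd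
  exact Finset.filter_subset _ _

end AuxLemmas
/-- Splitting each tile of a tiling of the Aztec diamond of order `n` by
horizontal skew tetrominos and square tetrominos into its two constituent
horizontal dominos yields the unique tiling of the Aztec diamond of order `n`
by horizontal dominos. -/
theorem aztec_skew_square_split_eq_unique_horiz_domino_tiling (n : ℕ)
    (T : Finset (Finset (ℤ × ℤ)))
    (hT : IsTiling (aztec n) (fun t => IsHorizSkewTetromino t ∨ IsSquareTetromino t) T) :
    IsTiling (aztec n) IsHorizDomino (T.biUnion rowPieces) ∧
      ∀ D : Finset (Finset (ℤ × ℤ)),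
        IsTiling (aztec n) IsHorizDomino D → D = T.biUnion rowPieces := by
  have hTil : IsTiling (aztec n) IsHorizDomino (T.biUnion rowPieces) := by
    obtain ⟨hP, hdisj, hun⟩ := hT
    refine ⟨?_, ?_, ?_⟩
    · intro d hd
      obtain ⟨t, htT, hdt⟩ := Finset.mem_biUnion.1 hd
      obtain ⟨a, b, c, rfl⟩ := shape_decomp (hP t htT)
      rw [rowPieces_pair] at hdt
      rcases Finset.mem_insert.1 hdt with rfl | h
      · exact (isHorizDomino_iff _).2 ⟨a, b, rfl⟩
      · rw [Finset.mem_singleton] at h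
        exact (isHorizDomino_iff _).2 ⟨c, b + 1, h⟩
    · intro x hx y hy hxy
      obtain ⟨t₁, ht₁T, hx'⟩ := Finset.mem_biUnion.1 (Finset.mem_coe.1 hx)
      obtain ⟨t₂, ht₂T, hy'⟩ := Finset.mem_biUnion.1 (Finset.mem_coe.1 hy)
      by_cases ht : t₁ = t₂
      · subst ht
        obtain ⟨a, b, c, rfl⟩ := shape_decomp (hP t₁ ht₁T)
        rw [rowPieces_pair, Finset.mem_insert, Finset.mem_singleton] at hx' hy'
        have hdj := pair_disjoint a b c
        rcases hx' with rfl | rfl <;> rcases hy' with rfl | rfl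
        · exact absurd rfl hxy
        · exact hdj
        · exact hdj.symm
        · exact absurd rfl hxy
      · exact (hdisj ht₁T ht₂T ht).mono (piece_subset hx') (piece_subset hy')
    · rw [Finset.biUnion_biUnion, ← hun]
      refine Finset.biUnion_congr rfl fun t htT => ?_
      obtain ⟨a, b, c, rfl⟩ := shape_decomp (hP t htT)
      rw [rowPieces_pair]
      ext ⟨x, y⟩
      simp [Prod.ext_iff]
      omega
  exact ⟨hTil, fun D hD => horiz_unique (aztec n) (aztec_rowConvex n) D _ hD hTil⟩
end

section
/- For every nonnegative integer n, the number of tilings of the Aztec diamond of order n by horizontal skew tetrominos and horizontal straight tetrominos is a perfect square. -/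
/-! ### Auxiliary development -/

def S1 (a b : ℤ) : Finset (ℤ × ℤ) := {(a,b),(a+1,b),(a+1,b+1),(a+2,b+1)}
def S2 (a b : ℤ) : Finset (ℤ × ℤ) := {(a,b+1),(a+1,b+1),(a+1,b),(a+2,b)}
def St (a b : ℤ) : Finset (ℤ × ℤ) := {(a,b),(a+1,b),(a+2,b),(a+3,b)}

def TileP (t : Finset (ℤ × ℤ)) : Prop :=
  IsHorizSkewTetromino t ∨ IsHorizStraightTetromino t

lemma ct1 (a b : ℤ) :
    cellTranslate (a,b) ({(0,0), (1,0), (1,1), (2,1)} : Finset (ℤ × ℤ)) = S1 a b := by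
  ext ⟨x,y⟩; simp [cellTranslate, S1, Prod.ext_iff]; omega

lemma ct2 (a b : ℤ) :
    cellTranslate (a,b) ({(0,1), (1,1), (1,0), (2,0)} : Finset (ℤ × ℤ)) = S2 a b := by
  ext ⟨x,y⟩; simp [cellTranslate, S2, Prod.ext_iff]; omega

lemma ct3 (a b : ℤ) :
    cellTranslate (a,b) ({(0,0), (1,0), (2,0), (3,0)} : Finset (ℤ × ℤ)) = St a b := by
  ext ⟨x,y⟩; simp [cellTranslate, St, Prod.ext_iff]; omega

lemma tileP_iff (t : Finset (ℤ × ℤ)) :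
    TileP t ↔ ∃ a b : ℤ, t = S1 a b ∨ t = S2 a b ∨ t = St a b := by
  constructor
  · rintro (⟨⟨a,b⟩, h | h⟩ | ⟨⟨a,b⟩, h⟩)
    · exact ⟨a, b, Or.inl (by rw [h, ct1])⟩
    · exact ⟨a, b, Or.inr (Or.inl (by rw [h, ct2]))⟩
    · exact ⟨a, b, Or.inr (Or.inr (by rw [h, ct3]))⟩
  · rintro ⟨a, b, h | h | h⟩
    · exact Or.inl ⟨(a,b), Or.inl (by rw [h, ct1])⟩
    · exact Or.inl ⟨(a,b), Or.inr (by rw [h, ct2])⟩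
    · exact Or.inr ⟨(a,b), by rw [h, ct3]⟩

lemma tileP_nonempty {t : Finset (ℤ × ℤ)} (h : TileP t) : t.Nonempty := by
  rw [tileP_iff] at h
  obtain ⟨a, b, h | h | h⟩ := h <;> subst h
  · exact ⟨(a,b), by simp [S1]⟩
  · exact ⟨(a,b+1), by simp [S2]⟩
  · exact ⟨(a,b), by simp [St]⟩

lemma card_filter_four (c1 c2 c3 c4 : ℤ×ℤ) (h12 : c1 ≠ c2) (h13 : c1 ≠ c3) (h14 : c1 ≠ c4)
    (h23 : c2 ≠ c3) (h24 : c2 ≠ c4) (h34 : c3 ≠ c4) (Q : ℤ×ℤ → Prop) [DecidablePred Q] :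
    (({c1,c2,c3,c4} : Finset (ℤ×ℤ)).filter Q).card =
      (if Q c1 then 1 else 0) + ((if Q c2 then 1 else 0) +
        ((if Q c3 then 1 else 0) + (if Q c4 then 1 else 0))) := by
  rw [Finset.card_filter]
  rw [Finset.sum_insert (by simp [h12, h13, h14]),
      Finset.sum_insert (by simp [h23, h24]),
      Finset.sum_insert (by simp [h34]), Finset.sum_singleton]

set_option linter.unreachableTactic false
set_option linter.unusedTactic false

lemma even_left (t : Finset (ℤ×ℤ)) (ht : TileP t) (j x0 : ℤ) (hx : (x0, j) ∉ t) :
    (t.filter (fun p => p.2 = j ∧ p.1 < x0)).card % 2 = 0 := by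
  rw [tileP_iff] at ht
  obtain ⟨a, b, h | h | h⟩ := ht <;> subst h
  · simp only [S1, Prod.ext_iff, Finset.mem_insert, Finset.mem_singleton] at hx
    rw [S1, card_filter_four] <;>
      first
        | (split_ifs <;> omega)
        | simp [Prod.ext_iff]
        | (simp [Prod.ext_iff]; omega)
  · simp only [S2, Prod.ext_iff, Finset.mem_insert, Finset.mem_singleton] at hx
    rw [S2, card_filter_four] <;>
      first
        | (split_ifs <;> omega)
        | simp [Prod.ext_iff]
        | (simp [Prod.ext_iff]; omega)
  · simp only [St, Prod.ext_iff, Finset.mem_insert, Finset.mem_singleton] at hx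
    rw [St, card_filter_four] <;>
      first
        | (split_ifs <;> omega)
        | simp [Prod.ext_iff]
        | (simp [Prod.ext_iff]; omega)

lemma aztec_row_left (n : ℕ) (j x0 : ℤ) (hj : j = 0 ∨ j = -1)
    (h1 : -(n:ℤ) ≤ x0) (h2 : x0 ≤ n) :
    ((aztec n).filter (fun p => p.2 = j ∧ p.1 < x0)).card = (x0 + n).toNat := by
  have he : ((aztec n).filter (fun p => p.2 = j ∧ p.1 < x0))
      = (Finset.Ico (-(n:ℤ)) x0).image (fun i => (i, j)) := by
    ext ⟨x,y⟩
    simp only [aztec, Finset.mem_filter, Finset.mem_product, Finset.mem_Icc,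
      Finset.mem_image, Finset.mem_Ico, Prod.ext_iff]
    constructor
    · rintro ⟨⟨⟨⟨hx1,hx2⟩,⟨hy1,hy2⟩⟩,habs⟩,hy,hx⟩
      exact ⟨x, ⟨hx1, hx⟩, rfl, hy.symm⟩
    · rintro ⟨i, ⟨hi1, hi2⟩, rfl, rfl⟩
      rcases abs_cases (2*i+1) with ⟨hA, hA'⟩ | ⟨hA, hA'⟩ <;>
        rcases hj with rfl | rfl <;> norm_num <;> omega
  rw [he, Finset.card_image_of_injective _ (by intro a b h; simpa using h), Int.card_Ico]
  omega

lemma total_even {n : ℕ} {T : Finset (Finset (ℤ×ℤ))}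
    (hP : ∀ t ∈ T, TileP t)
    (hd : (T : Set (Finset (ℤ × ℤ))).PairwiseDisjoint id)
    (hu : T.biUnion id = aztec n)
    {t : Finset (ℤ×ℤ)} (ht : t ∈ T) (j x0 : ℤ) (hmem : (x0, j) ∈ t)
    (hown : (t.filter (fun p => p.2 = j ∧ p.1 < x0)).card % 2 = 0) :
    ((aztec n).filter (fun p => p.2 = j ∧ p.1 < x0)).card % 2 = 0 := by
  rw [← hu, Finset.filter_biUnion]
  rw [Finset.card_biUnion]
  · suffices h : 2 ∣ ∑ u ∈ T, (Finset.filter (fun p => p.2 = j ∧ p.1 < x0) (id u)).card by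
      omega
    apply Finset.dvd_sum
    intro t' ht'
    simp only [id_eq]
    rcases eq_or_ne t' t with rfl | hne
    · omega
    · have hnm : (x0, j) ∉ t' := by
        intro hc
        exact (Finset.disjoint_left.mp (hd ht' ht hne) hc) hmem
      have := even_left t' (hP t' ht') j x0 hnm
      omega
  · intro a ha b hb hab
    exact Finset.disjoint_filter_filter (hd ha hb hab)

lemma bounds_of_mem_aztec {n : ℕ} {x y : ℤ} (h : (x,y) ∈ aztec n) :
    -(n:ℤ) ≤ x ∧ x ≤ n := by
  simp only [aztec, Finset.mem_filter, Finset.mem_product, Finset.mem_Icc] at h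
  exact h.1.1

lemma no_cross_skew1 {n : ℕ} {T : Finset (Finset (ℤ×ℤ))}
    (hP : ∀ t ∈ T, TileP t)
    (hd : (T : Set (Finset (ℤ × ℤ))).PairwiseDisjoint id)
    (hu : T.biUnion id = aztec n)
    {a : ℤ} (ht : S1 a (-1) ∈ T) : False := by
  have hsub : S1 a (-1) ⊆ aztec n := by
    rw [← hu]; exact Finset.subset_biUnion_of_mem id ht
  have hb1 := bounds_of_mem_aztec (hsub (show ((a:ℤ), (-1:ℤ)) ∈ S1 a (-1) by simp [S1]))
  have hb2 := bounds_of_mem_aztec (hsub (show ((a+1:ℤ), (0:ℤ)) ∈ S1 a (-1) by simp [S1]))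
  have h1 := total_even hP hd hu ht (-1) a (by simp [S1])
    (by rw [S1, card_filter_four] <;> first
          | (split_ifs <;> omega)
          | simp [Prod.ext_iff]
          | (simp [Prod.ext_iff]; omega))
  have h2 := total_even hP hd hu ht 0 (a+1) (by simp [S1])
    (by rw [S1, card_filter_four] <;> first
          | (split_ifs <;> omega)
          | simp [Prod.ext_iff]
          | (simp [Prod.ext_iff]; omega))
  rw [aztec_row_left n (-1) a (by omega) hb1.1 hb1.2] at h1
  rw [aztec_row_left n 0 (a+1) (by omega) hb2.1 hb2.2] at h2
  omega

lemma no_cross_skew2 {n : ℕ} {T : Finset (Finset (ℤ×ℤ))}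
    (hP : ∀ t ∈ T, TileP t)
    (hd : (T : Set (Finset (ℤ × ℤ))).PairwiseDisjoint id)
    (hu : T.biUnion id = aztec n)
    {a : ℤ} (ht : S2 a (-1) ∈ T) : False := by
  have hsub : S2 a (-1) ⊆ aztec n := by
    rw [← hu]; exact Finset.subset_biUnion_of_mem id ht
  have hb1 := bounds_of_mem_aztec (hsub (show ((a:ℤ), (0:ℤ)) ∈ S2 a (-1) by
    simp [S2]))
  have hb2 := bounds_of_mem_aztec (hsub (show ((a+1:ℤ), (-1:ℤ)) ∈ S2 a (-1) by
    simp [S2]))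
  have h1 := total_even hP hd hu ht 0 a (by simp [S2])
    (by rw [S2, card_filter_four] <;> first
          | (split_ifs <;> omega)
          | simp [Prod.ext_iff]
          | (simp [Prod.ext_iff]; omega))
  have h2 := total_even hP hd hu ht (-1) (a+1) (by simp [S2])
    (by rw [S2, card_filter_four] <;> first
          | (split_ifs <;> omega)
          | simp [Prod.ext_iff]
          | (simp [Prod.ext_iff]; omega))
  rw [aztec_row_left n 0 a (by omega) hb1.1 hb1.2] at h1
  rw [aztec_row_left n (-1) (a+1) (by omega) hb2.1 hb2.2] at h2
  omega

/-- No tile of a tiling of the Aztec diamond crosses the horizontal midline. -/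
lemma no_cross {n : ℕ} {T : Finset (Finset (ℤ×ℤ))}
    (hP : ∀ t ∈ T, TileP t)
    (hd : (T : Set (Finset (ℤ × ℤ))).PairwiseDisjoint id)
    (hu : T.biUnion id = aztec n)
    {t : Finset (ℤ×ℤ)} (ht : t ∈ T) :
    (∀ p ∈ t, 0 ≤ p.2) ∨ (∀ p ∈ t, p.2 < 0) := by
  have hshape := (tileP_iff t).mp (hP t ht)
  obtain ⟨a, b, h | h | h⟩ := hshape
  · subst h
    rcases le_or_gt 0 b with hb | hb
    · left; intro p hp
      simp only [S1, Finset.mem_insert, Finset.mem_singleton] at hp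
      rcases hp with rfl|rfl|rfl|rfl <;> simp <;> omega
    rcases lt_or_ge b (-1) with hb' | hb'
    · right; intro p hp
      simp only [S1, Finset.mem_insert, Finset.mem_singleton] at hp
      rcases hp with rfl|rfl|rfl|rfl <;> simp <;> omega
    · exfalso
      have hb2 : b = -1 := by omega
      subst hb2
      exact no_cross_skew1 hP hd hu ht
  · subst h
    rcases le_or_gt 0 b with hb | hb
    · left; intro p hp
      simp only [S2, Finset.mem_insert, Finset.mem_singleton] at hp
      rcases hp with rfl|rfl|rfl|rfl <;> simp <;> omega
    rcases lt_or_ge b (-1) with hb' | hb'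
    · right; intro p hp
      simp only [S2, Finset.mem_insert, Finset.mem_singleton] at hp
      rcases hp with rfl|rfl|rfl|rfl <;> simp <;> omega
    · exfalso
      have hb2 : b = -1 := by omega
      subst hb2
      exact no_cross_skew2 hP hd hu ht
  · subst h
    rcases le_or_gt 0 b with hb | hb
    · left; intro p hp
      simp only [St, Finset.mem_insert, Finset.mem_singleton] at hp
      rcases hp with rfl|rfl|rfl|rfl <;> simp <;> omega
    · right; intro p hp
      simp only [St, Finset.mem_insert, Finset.mem_singleton] at hp
      rcases hp with rfl|rfl|rfl|rfl <;> simp <;> omega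
noncomputable def Hn (n : ℕ) : Finset (ℤ × ℤ) := (aztec n).filter (fun p => 0 ≤ p.2)
noncomputable def Bn (n : ℕ) : Finset (ℤ × ℤ) := (aztec n).filter (fun p => p.2 < 0)

lemma mem_tilings {R : Finset (ℤ × ℤ)} {P : Finset (ℤ × ℤ) → Prop}
    {T : Finset (Finset (ℤ × ℤ))} : T ∈ tilings R P ↔ IsTiling R P T := by
  classical
  simp only [tilings, Finset.mem_filter, Finset.mem_powerset, and_iff_right_iff_imp]
  intro hT
  intro t ht
  rw [Finset.mem_powerset, ← hT.2.2]
  exact Finset.subset_biUnion_of_mem id ht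

lemma subset_of_mem_tiling {R : Finset (ℤ × ℤ)} {P : Finset (ℤ × ℤ) → Prop}
    {T : Finset (Finset (ℤ × ℤ))} (hT : IsTiling R P T)
    {t : Finset (ℤ × ℤ)} (ht : t ∈ T) : t ⊆ R := by
  rw [← hT.2.2]; exact Finset.subset_biUnion_of_mem id ht

/-- In a tiling of the Aztec diamond, each tile is contained in the top or bottom half. -/
lemma tile_in_half {n : ℕ} {T : Finset (Finset (ℤ×ℤ))}
    (hT : IsTiling (aztec n) TileP T) {t : Finset (ℤ×ℤ)} (ht : t ∈ T) :
    t ⊆ Hn n ∨ t ⊆ Bn n := by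
  obtain ⟨hP, hd, hu⟩ := hT
  have hsub : t ⊆ aztec n := subset_of_mem_tiling ⟨hP, hd, hu⟩ ht
  rcases no_cross hP hd hu ht with h | h
  · left; intro p hp
    simp only [Hn, Finset.mem_filter]
    exact ⟨hsub hp, h p hp⟩
  · right; intro p hp
    simp only [Bn, Finset.mem_filter]
    exact ⟨hsub hp, h p hp⟩

lemma half_tiling_top {n : ℕ} {T : Finset (Finset (ℤ×ℤ))}
    (hT : IsTiling (aztec n) TileP T) :
    IsTiling (Hn n) TileP (T.filter (fun u => u ⊆ Hn n)) := by
  obtain ⟨hP, hd, hu⟩ := hT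
  refine ⟨fun t ht => hP t (Finset.mem_filter.mp ht).1,
    hd.subset (by intro u hu'; exact (Finset.mem_filter.mp hu').1), ?_⟩
  ext x
  simp only [Finset.mem_biUnion, Finset.mem_filter, id_eq]
  constructor
  · rintro ⟨t, ⟨htT, htH⟩, hx⟩
    exact htH hx
  · intro hx
    have hx' : x ∈ aztec n := (Finset.mem_filter.mp hx).1
    rw [← hu] at hx'
    obtain ⟨t, htT, hxt⟩ := Finset.mem_biUnion.mp hx'
    rcases tile_in_half ⟨hP, hd, hu⟩ htT with hh | hh
    · exact ⟨t, ⟨htT, hh⟩, hxt⟩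
    · exfalso
      have h1 : (0:ℤ) ≤ x.2 := (Finset.mem_filter.mp hx).2
      have h2 : x.2 < 0 := (Finset.mem_filter.mp (hh hxt)).2
      omega

lemma half_tiling_bot {n : ℕ} {T : Finset (Finset (ℤ×ℤ))}
    (hT : IsTiling (aztec n) TileP T) :
    IsTiling (Bn n) TileP (T.filter (fun u => u ⊆ Bn n)) := by
  obtain ⟨hP, hd, hu⟩ := hT
  refine ⟨fun t ht => hP t (Finset.mem_filter.mp ht).1,
    hd.subset (by intro u hu'; exact (Finset.mem_filter.mp hu').1), ?_⟩
  ext x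
  simp only [Finset.mem_biUnion, Finset.mem_filter, id_eq]
  constructor
  · rintro ⟨t, ⟨htT, htH⟩, hx⟩
    exact htH hx
  · intro hx
    have hx' : x ∈ aztec n := (Finset.mem_filter.mp hx).1
    rw [← hu] at hx'
    obtain ⟨t, htT, hxt⟩ := Finset.mem_biUnion.mp hx'
    rcases tile_in_half ⟨hP, hd, hu⟩ htT with hh | hh
    · exfalso
      have h1 : x.2 < 0 := (Finset.mem_filter.mp hx).2
      have h2 : (0:ℤ) ≤ x.2 := (Finset.mem_filter.mp (hh hxt)).2
      omega
    · exact ⟨t, ⟨htT, hh⟩, hxt⟩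

lemma union_tiling {n : ℕ} {T1 T2 : Finset (Finset (ℤ×ℤ))}
    (h1 : IsTiling (Hn n) TileP T1) (h2 : IsTiling (Bn n) TileP T2) :
    IsTiling (aztec n) TileP (T1 ∪ T2) := by
  have hsub1 : ∀ t ∈ T1, t ⊆ Hn n := fun t ht => subset_of_mem_tiling h1 ht
  have hsub2 : ∀ t ∈ T2, t ⊆ Bn n := fun t ht => subset_of_mem_tiling h2 ht
  have hdisjHB : ∀ p : ℤ×ℤ, p ∈ Hn n → p ∈ Bn n → False := by
    intro p hp1 hp2
    have := (Finset.mem_filter.mp hp1).2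
    have := (Finset.mem_filter.mp hp2).2
    omega
  refine ⟨?_, ?_, ?_⟩
  · intro t ht
    rcases Finset.mem_union.mp ht with h | h
    · exact h1.1 t h
    · exact h2.1 t h
  · intro u hu' v hv' huv
    simp only [Finset.coe_union, Set.mem_union, Finset.mem_coe] at hu' hv'
    have key : ∀ s1 s2 : Finset (ℤ×ℤ), s1 ∈ T1 → s2 ∈ T2 → Disjoint (id s1) (id s2) := by
      intro s1 s2 hs1 hs2
      simp only [id_eq]
      rw [Finset.disjoint_left]
      intro p hp1 hp2
      exact hdisjHB p (hsub1 s1 hs1 hp1) (hsub2 s2 hs2 hp2)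
    rcases hu' with hu' | hu' <;> rcases hv' with hv' | hv'
    · exact h1.2.1 hu' hv' huv
    · exact key u v hu' hv'
    · exact (key v u hv' hu').symm
    · exact h2.2.1 hu' hv' huv
  · have hbu : (T1 ∪ T2).biUnion id = T1.biUnion id ∪ T2.biUnion id := by
      ext p
      simp only [Finset.mem_biUnion, Finset.mem_union]
      constructor
      · rintro ⟨t, h | h, hp⟩
        · exact Or.inl ⟨t, h, hp⟩
        · exact Or.inr ⟨t, h, hp⟩
      · rintro (⟨t, h, hp⟩ | ⟨t, h, hp⟩)
        · exact ⟨t, Or.inl h, hp⟩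
        · exact ⟨t, Or.inr h, hp⟩
    rw [hbu, h1.2.2, h2.2.2]
    ext p
    simp only [Finset.mem_union, Hn, Bn, Finset.mem_filter]
    constructor
    · rintro (⟨h,_⟩ | ⟨h,_⟩) <;> exact h
    · intro hp
      rcases le_or_gt 0 p.2 with h | h
      · exact Or.inl ⟨hp, h⟩
      · exact Or.inr ⟨hp, h⟩

lemma split_card (n : ℕ) :
    (tilings (aztec n) TileP).card =
      (tilings (Hn n) TileP).card * (tilings (Bn n) TileP).card := by
  classical
  rw [← Finset.card_product]
  apply Finset.card_nbij'
    (i := fun T => (T.filter (fun u => u ⊆ Hn n), T.filter (fun u => u ⊆ Bn n)))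
    (j := fun q => q.1 ∪ q.2)
  · intro T hT
    rw [Finset.mem_coe, mem_tilings] at hT
    rw [Finset.mem_coe, Finset.mem_product]
    exact ⟨mem_tilings.mpr (half_tiling_top hT), mem_tilings.mpr (half_tiling_bot hT)⟩
  · intro q hq
    rw [Finset.mem_coe, Finset.mem_product] at hq
    exact mem_tilings.mpr (union_tiling (mem_tilings.mp hq.1) (mem_tilings.mp hq.2))
  · intro T hT
    rw [Finset.mem_coe, mem_tilings] at hT
    ext u
    simp only [Finset.mem_union, Finset.mem_filter]
    constructor
    · rintro (⟨h,_⟩ | ⟨h,_⟩) <;> exact h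
    · intro hu'
      rcases tile_in_half hT hu' with h | h
      · exact Or.inl ⟨hu', h⟩
      · exact Or.inr ⟨hu', h⟩
  · rintro ⟨T1, T2⟩ hq
    rw [Finset.mem_coe, Finset.mem_product] at hq
    have h1 := mem_tilings.mp hq.1
    have h2 := mem_tilings.mp hq.2
    have hdisjHB : ∀ p : ℤ×ℤ, p ∈ Hn n → p ∈ Bn n → False := by
      intro p hp1 hp2
      have := (Finset.mem_filter.mp hp1).2
      have := (Finset.mem_filter.mp hp2).2
      omega
    have hne : ∀ t ∈ T1 ∪ T2, t.Nonempty := by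
      intro t ht
      rcases Finset.mem_union.mp ht with h | h
      · exact tileP_nonempty (h1.1 t h)
      · exact tileP_nonempty (h2.1 t h)
    simp only [Prod.mk.injEq]
    constructor
    · ext u
      simp only [Finset.mem_filter, Finset.mem_union]
      constructor
      · rintro ⟨h | h, hsub⟩
        · exact h
        · exfalso
          obtain ⟨p, hp⟩ := tileP_nonempty (h2.1 u h)
          exact hdisjHB p (hsub hp) (subset_of_mem_tiling h2 h hp)
      · intro h
        exact ⟨Or.inl h, subset_of_mem_tiling h1 h⟩
    · ext u
      simp only [Finset.mem_filter, Finset.mem_union]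
      constructor
      · rintro ⟨h | h, hsub⟩
        · exfalso
          obtain ⟨p, hp⟩ := tileP_nonempty (h1.1 u h)
          exact hdisjHB p (subset_of_mem_tiling h1 h hp) (hsub hp)
        · exact h
      · intro h
        exact ⟨Or.inr h, subset_of_mem_tiling h2 h⟩

/-! ### Reflection across the horizontal midline -/

def mir (p : ℤ × ℤ) : ℤ × ℤ := (p.1, -1 - p.2)

lemma mir_invol : ∀ p, mir (mir p) = p := by
  rintro ⟨x, y⟩; simp [mir]

lemma mir_inj : Function.Injective mir := by
  intro p q h
  have := congrArg mir h
  rwa [mir_invol, mir_invol] at this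

lemma mir_image_S1 (a b : ℤ) : (S1 a b).image mir = S2 a (-2-b) := by
  rw [S1]
  simp only [Finset.image_insert, Finset.image_singleton, mir]
  ext ⟨x,y⟩
  simp only [S2, Finset.mem_insert, Finset.mem_singleton, Prod.ext_iff]
  omega

lemma mir_image_S2 (a b : ℤ) : (S2 a b).image mir = S1 a (-2-b) := by
  rw [S2]
  simp only [Finset.image_insert, Finset.image_singleton, mir]
  ext ⟨x,y⟩
  simp only [S1, Finset.mem_insert, Finset.mem_singleton, Prod.ext_iff]
  omega

lemma mir_image_St (a b : ℤ) : (St a b).image mir = St a (-1-b) := by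
  rw [St]
  simp only [Finset.image_insert, Finset.image_singleton, mir]
  ext ⟨x,y⟩
  simp only [St, Finset.mem_insert, Finset.mem_singleton, Prod.ext_iff]
  try omega

lemma mir_tileP {t : Finset (ℤ×ℤ)} (h : TileP t) : TileP (t.image mir) := by
  rw [tileP_iff] at h ⊢
  obtain ⟨a, b, h | h | h⟩ := h <;> subst h
  · exact ⟨a, -2-b, Or.inr (Or.inl (mir_image_S1 a b))⟩
  · exact ⟨a, -2-b, Or.inl (mir_image_S2 a b)⟩
  · exact ⟨a, -1-b, Or.inr (Or.inr (mir_image_St a b))⟩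

lemma mir_mem_aztec {n : ℕ} {p : ℤ×ℤ} (h : p ∈ aztec n) : mir p ∈ aztec n := by
  obtain ⟨x, y⟩ := p
  simp only [aztec, mir, Finset.mem_filter, Finset.mem_product, Finset.mem_Icc] at h ⊢
  obtain ⟨⟨hx, hy⟩, habs⟩ := h
  have h2 : |2*(-1-y)+1| = |2*y+1| := by
    rw [show (2*(-1-y)+1 : ℤ) = -(2*y+1) by ring, abs_neg]
  rw [h2]
  have h3 := abs_nonneg (2*x+1)
  rcases abs_cases (2*y+1) with ⟨hA, hA'⟩ | ⟨hA, hA'⟩ <;>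
    exact ⟨⟨hx, by omega⟩, habs⟩

lemma mir_image_Hn (n : ℕ) : (Hn n).image mir = Bn n := by
  ext p
  simp only [Finset.mem_image]
  constructor
  · rintro ⟨q, hq, rfl⟩
    simp only [Hn, Finset.mem_filter] at hq
    simp only [Bn, Finset.mem_filter, mir]
    refine ⟨mir_mem_aztec hq.1, ?_⟩
    have := hq.2
    change (-1 - q.2 : ℤ) < 0
    omega
  · intro hp
    refine ⟨mir p, ?_, mir_invol p⟩
    simp only [Bn, Finset.mem_filter] at hp
    simp only [Hn, Finset.mem_filter]
    refine ⟨mir_mem_aztec hp.1, ?_⟩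
    have := hp.2
    change (0:ℤ) ≤ -1 - p.2
    omega

lemma mir_image_Bn (n : ℕ) : (Bn n).image mir = Hn n := by
  rw [← mir_image_Hn n, Finset.image_image]
  have : mir ∘ mir = id := funext mir_invol
  rw [this, Finset.image_id]

def mirT (T : Finset (Finset (ℤ×ℤ))) : Finset (Finset (ℤ×ℤ)) :=
  T.image (fun u => u.image mir)

lemma mirT_invol (T : Finset (Finset (ℤ×ℤ))) : mirT (mirT T) = T := by
  unfold mirT
  rw [Finset.image_image]
  have : ((fun u : Finset (ℤ×ℤ) => u.image mir) ∘ (fun u => u.image mir)) = id := by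
    funext u
    simp only [Function.comp_apply, Finset.image_image, id_eq]
    have : mir ∘ mir = id := funext mir_invol
    rw [this, Finset.image_id]
  rw [this, Finset.image_id]

lemma mirT_tiling {R R' : Finset (ℤ×ℤ)} (hR : R.image mir = R')
    {T : Finset (Finset (ℤ×ℤ))} (hT : IsTiling R TileP T) :
    IsTiling R' TileP (mirT T) := by
  obtain ⟨hP, hd, hu⟩ := hT
  refine ⟨?_, ?_, ?_⟩
  · intro t ht
    obtain ⟨u, hu', rfl⟩ := Finset.mem_image.mp ht
    exact mir_tileP (hP u hu')
  · intro u hu' v hv' huv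
    simp only [mirT, Finset.coe_image, Set.mem_image, Finset.mem_coe] at hu' hv'
    obtain ⟨a, ha, rfl⟩ := hu'
    obtain ⟨b, hb, rfl⟩ := hv'
    have hab : a ≠ b := fun h => huv (by rw [h])
    exact (Finset.disjoint_image mir_inj).mpr (hd ha hb hab)
  · rw [← hR, ← hu]
    ext p
    simp only [mirT, Finset.mem_biUnion, Finset.mem_image, id_eq]
    constructor
    · rintro ⟨t, ⟨u, hu', rfl⟩, hp⟩
      obtain ⟨q, hq, rfl⟩ := Finset.mem_image.mp hp
      exact ⟨q, ⟨u, hu', hq⟩, rfl⟩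
    · rintro ⟨q, ⟨u, hu', hq⟩, rfl⟩
      exact ⟨u.image mir, ⟨u, hu', rfl⟩, Finset.mem_image_of_mem mir hq⟩

lemma mir_card (n : ℕ) :
    (tilings (Bn n) TileP).card = (tilings (Hn n) TileP).card := by
  classical
  apply Finset.card_nbij' (i := mirT) (j := mirT)
  · intro T hT
    exact mem_tilings.mpr (mirT_tiling (mir_image_Bn n) (mem_tilings.mp hT))
  · intro T hT
    exact mem_tilings.mpr (mirT_tiling (mir_image_Hn n) (mem_tilings.mp hT))
  · intro T _; exact mirT_invol T
  · intro T _; exact mirT_invol T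

/-- The number of tilings of the Aztec diamond of order `n` by horizontal skew
tetrominos and horizontal straight tetrominos is a perfect square. -/
theorem aztec_hskew_hstraight_count_is_square (n : ℕ) :
    ∃ k : ℕ,
      (tilings (aztec n)
        (fun t => IsHorizSkewTetromino t ∨ IsHorizStraightTetromino t)).card
        = k ^ 2 := by
  refine ⟨(tilings (Hn n) TileP).card, ?_⟩
  have h : (tilings (aztec n) (fun t => IsHorizSkewTetromino t ∨ IsHorizStraightTetromino t))
      = tilings (aztec n) TileP := rfl
  rw [h, split_card, mir_card, sq]
end
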